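/- A permutation avoiding both 2413 and 3142 of length at least 2 is decomposable as a direct sum or a skew sum of two nonempty permutations, and hence every {2413,3142}-avoiding permutation is separable. -/

import Mathlib

/-- Pattern containment: `π` contains the pattern `σ`. -/
def PermContains {n m : ℕ} (π : Fin n → Fin n) (σ : Fin m → Fin m) : Prop :=
  ∃ f : Fin m → Fin n, StrictMono f ∧ ∀ a b : Fin m, σ a < σ b ↔ π (f a) < π (f b)

/-- The direct sum `σ ⊕ τ` of two permutations. -/
def permDSum {m n : ℕ} (σ : Fin m → Fin m) (τ : Fin n → Fin n) : Fin (m + n) → Fin (m + n) :=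
  fun i =>
    if h : (i : ℕ) < m then
      ⟨(σ ⟨(i : ℕ), h⟩).val, by have := (σ ⟨(i : ℕ), h⟩).isLt; omega⟩
    else
      ⟨m + (τ ⟨(i : ℕ) - m, by omega⟩).val, by
        have := (τ ⟨(i : ℕ) - m, by omega⟩).isLt; omega⟩

/-- The skew sum `σ ⊖ τ` of two permutations. -/
def permSSum {m n : ℕ} (σ : Fin m → Fin m) (τ : Fin n → Fin n) : Fin (m + n) → Fin (m + n) :=
  fun i =>
    if h : (i : ℕ) < m then
      ⟨n + (σ ⟨(i : ℕ), h⟩).val, by have := (σ ⟨(i : ℕ), h⟩).isLt; omega⟩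
    else
      ⟨(τ ⟨(i : ℕ) - m, by omega⟩).val, by
        have := (τ ⟨(i : ℕ) - m, by omega⟩).isLt; omega⟩

/-- Separable permutations: generated from the singleton by direct and skew sums. -/
inductive SeparablePerm : (n : ℕ) → (Fin n → Fin n) → Prop
  | single : SeparablePerm 1 id
  | dsum {m n : ℕ} {σ : Fin m → Fin m} {τ : Fin n → Fin n} :
      SeparablePerm m σ → SeparablePerm n τ → SeparablePerm (m + n) (permDSum σ τ)
  | ssum {m n : ℕ} {σ : Fin m → Fin m} {τ : Fin n → Fin n} :
      SeparablePerm m σ → SeparablePerm n τ → SeparablePerm (m + n) (permSSum σ τ)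

def p2413 : Fin 4 → Fin 4 := ![1, 3, 0, 2]
def p3142 : Fin 4 → Fin 4 := ![2, 0, 3, 1]


def quad {n : ℕ} (i1 i2 i3 i4 : Fin n) : Fin 4 → Fin n :=
  fun x => if x.val = 0 then i1 else if x.val = 1 then i2 else if x.val = 2 then i3 else i4

lemma p2413_val : ∀ x : Fin 4, (p2413 x : ℕ) =
    if x.val = 0 then 1 else if x.val = 1 then 3 else if x.val = 2 then 0 else 2 := by decide

lemma p3142_val : ∀ x : Fin 4, (p3142 x : ℕ) =
    if x.val = 0 then 2 else if x.val = 1 then 0 else if x.val = 2 then 3 else 1 := by decide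

lemma quad_val {n : ℕ} (π : Fin n → Fin n) (i1 i2 i3 i4 : Fin n) (x : Fin 4) :
    (π (quad i1 i2 i3 i4 x) : ℕ) =
      if x.val = 0 then (π i1 : ℕ) else if x.val = 1 then (π i2 : ℕ)
        else if x.val = 2 then (π i3 : ℕ) else (π i4 : ℕ) := by
  simp only [quad]; split_ifs <;> rfl

lemma contains2413 {n : ℕ} (π : Fin n → Fin n) (i1 i2 i3 i4 : Fin n)
    (h12 : (i1:ℕ) < i2) (h23 : (i2:ℕ) < i3) (h34 : (i3:ℕ) < i4)
    (v1 : (π i3:ℕ) < π i1) (v2 : (π i1:ℕ) < π i4) (v3 : (π i4:ℕ) < π i2) :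
    PermContains π p2413 := by
  refine ⟨quad i1 i2 i3 i4, ?_, ?_⟩
  · intro a b hab
    obtain ⟨av, ha⟩ := a; obtain ⟨bv, hb⟩ := b
    have hab' : av < bv := hab
    interval_cases av <;> interval_cases bv <;> simp [quad] <;> omega
  · intro a b
    rw [Fin.lt_def, Fin.lt_def, p2413_val, p2413_val, quad_val, quad_val]
    split_ifs <;> omega

lemma contains3142 {n : ℕ} (π : Fin n → Fin n) (i1 i2 i3 i4 : Fin n)
    (h12 : (i1:ℕ) < i2) (h23 : (i2:ℕ) < i3) (h34 : (i3:ℕ) < i4)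
    (v1 : (π i2:ℕ) < π i4) (v2 : (π i4:ℕ) < π i1) (v3 : (π i1:ℕ) < π i3) :
    PermContains π p3142 := by
  refine ⟨quad i1 i2 i3 i4, ?_, ?_⟩
  · intro a b hab
    obtain ⟨av, ha⟩ := a; obtain ⟨bv, hb⟩ := b
    have hab' : av < bv := hab
    interval_cases av <;> interval_cases bv <;> simp [quad] <;> omega
  · intro a b
    rw [Fin.lt_def, Fin.lt_def, p3142_val, p3142_val, quad_val, quad_val]
    split_ifs <;> omega

section Graph
variable {V : Type*} [DecidableEq V]
set_option linter.unusedSectionVars false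
set_option linter.unusedVariables false

/-- Reachability within a finite set `S` along a relation `R`. -/
def ReachIn (R : V → V → Prop) (S : Finset V) : V → V → Prop :=
  Relation.ReflTransGen (fun x y => x ∈ S ∧ y ∈ S ∧ R x y)

/-- `S` is `R`-connected. -/
def ConnOn (R : V → V → Prop) (S : Finset V) : Prop :=
  ∀ a ∈ S, ∀ b ∈ S, ReachIn R S a b

/-- Complement relation. -/
def ComplRel (R : V → V → Prop) : V → V → Prop := fun a b => a ≠ b ∧ ¬ R a b

/-- No induced path on four vertices. -/
def P4Free (R : V → V → Prop) : Prop :=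
  ∀ a b c d : V, a ≠ b → a ≠ c → a ≠ d → b ≠ c → b ≠ d → c ≠ d →
    R a b → R b c → R c d → ¬ R a c → ¬ R a d → ¬ R b d → False

lemma complRel_symm {R : V → V → Prop} (h : Symmetric R) : Symmetric (ComplRel R) :=
  fun _ _ hxy => ⟨hxy.1.symm, fun hr => hxy.2 (h hr)⟩

lemma complRel_irrefl (R : V → V → Prop) (x : V) : ¬ ComplRel R x x := fun h => h.1 rfl

lemma complRel_complRel {R : V → V → Prop} (hirr : ∀ x, ¬ R x x) (x y : V) :
    ComplRel (ComplRel R) x y ↔ R x y := by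
  constructor
  · rintro ⟨hne, h⟩
    by_contra hR
    exact h ⟨hne, hR⟩
  · intro hR
    refine ⟨fun he => hirr x (he ▸ hR), fun hc => hc.2 hR⟩

lemma complRel_P4Free {R : V → V → Prop} (hsym : Symmetric R) (hP4 : P4Free R) :
    P4Free (ComplRel R) := by
  intro a b c d hab hac had hbc hbd hcd eab ebc ecd nac nad nbd
  -- complement of path a-b-c-d is the path c-a-d-b in R
  have Rac : R a c := by
    by_contra h; exact nac ⟨hac, h⟩
  have Rad : R a d := by
    by_contra h; exact nad ⟨had, h⟩
  have Rbd : R b d := by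
    by_contra h; exact nbd ⟨hbd, h⟩
  exact hP4 c a d b (Ne.symm hac) hcd (Ne.symm hbc) had hab (Ne.symm hbd)
    (hsym Rac) Rad (hsym Rbd) (fun h => ecd.2 h) (fun h => ebc.2 (hsym h)) (fun h => eab.2 h)

lemma connOn_congr {R R' : V → V → Prop} (h : ∀ x y, R x y ↔ R' x y) {S : Finset V}
    (hc : ConnOn R S) : ConnOn R' S := by
  intro a ha b hb
  exact Relation.ReflTransGen.mono (p := fun x y => x ∈ S ∧ y ∈ S ∧ R' x y)
    (fun x y (hxy : x ∈ S ∧ y ∈ S ∧ R x y) => ⟨hxy.1, hxy.2.1, (h x y).1 hxy.2.2⟩) a b (hc a ha b hb)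

lemma reachIn_mem_right {R : V → V → Prop} {S : Finset V} {x y : V}
    (h : ReachIn R S x y) (hy : y ∉ S) : x = y := by
  rcases Relation.ReflTransGen.cases_tail h with h' | ⟨c, _, hstep⟩
  · exact h'.symm
  · exact absurd hstep.2.1 hy

/-- Splitting a walk in `S` at the vertex `v`. -/
lemma reach_split {R : V → V → Prop} {S : Finset V} {v a : V} (hirr : ∀ x, ¬ R x x)
    (hav : a ≠ v) :
    ∀ b, ReachIn R S a b →
      ReachIn R (S.erase v) a b ∨
      ((∃ y, y ∈ S.erase v ∧ R y v ∧ ReachIn R (S.erase v) a y) ∧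
       (b = v ∨ ∃ z, z ∈ S.erase v ∧ R v z ∧ ReachIn R (S.erase v) z b)) := by
  intro b hb
  induction hb with
  | refl => exact Or.inl Relation.ReflTransGen.refl
  | @tail c b hac hstep ih =>
    obtain ⟨hcS, hbS, hRcb⟩ := hstep
    rcases ih with hT | ⟨hy, hz⟩
    · by_cases hbv : b = v
      · rw [hbv] at hRcb
        have hcv : c ≠ v := fun h => hirr v (h ▸ hRcb)
        exact Or.inr ⟨⟨c, Finset.mem_erase.2 ⟨hcv, hcS⟩, hRcb, hT⟩, Or.inl hbv⟩
      · have hcv : c ≠ v := by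
          intro h
          subst h
          exact hav (reachIn_mem_right hT (fun hm => (Finset.mem_erase.1 hm).1 rfl))
        exact Or.inl (hT.tail ⟨Finset.mem_erase.2 ⟨hcv, hcS⟩, Finset.mem_erase.2 ⟨hbv, hbS⟩, hRcb⟩)
    · rcases hz with hcv | ⟨z, hzT, hRvz, hzc⟩
      · rw [hcv] at hRcb
        have hbv : b ≠ v := fun h => hirr v (h ▸ hRcb)
        exact Or.inr ⟨hy, Or.inr ⟨b, Finset.mem_erase.2 ⟨hbv, hbS⟩, hRcb,
          Relation.ReflTransGen.refl⟩⟩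
      · by_cases hbv : b = v
        · exact Or.inr ⟨hy, Or.inl hbv⟩
        · have hcv : c ≠ v := by
            intro h
            subst h
            have := reachIn_mem_right hzc (fun hm => (Finset.mem_erase.1 hm).1 rfl)
            subst this
            exact (Finset.mem_erase.1 hzT).1 rfl
          exact Or.inr ⟨hy, Or.inr ⟨z, hzT, hRvz,
            hzc.tail ⟨Finset.mem_erase.2 ⟨hcv, hcS⟩, Finset.mem_erase.2 ⟨hbv, hbS⟩, hRcb⟩⟩⟩

/-- Along a walk from a non-neighbor of `v` to a neighbor of `v`, there is a
consecutive pair where adjacency to `v` switches on. -/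
lemma first_nbr {R : V → V → Prop} {T : Finset V} {u v : V} (hu : u ∈ T) :
    ∀ y, ReachIn R T u y → ¬ R u v → R y v →
      ∃ p q, p ∈ T ∧ q ∈ T ∧ ReachIn R T u p ∧ ReachIn R T u q ∧
        R p q ∧ ¬ R p v ∧ R q v := by
  intro y hy
  induction hy with
  | refl => intro h1 h2; exact absurd h2 h1
  | @tail c y huc hstep ih =>
    intro huv hyv
    obtain ⟨hcT, hyT, hRcy⟩ := hstep
    by_cases hcv : R c v
    · exact ih huv hcv
    · exact ⟨c, y, hcT, hyT, huc, huc.tail ⟨hcT, hyT, hRcy⟩, hRcy, hcv, hyv⟩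

/-- Key lemma: disconnection propagates. -/
lemma keyL {R : V → V → Prop} (hsym : Symmetric R) (hirr : ∀ x, ¬ R x x) (hP4 : P4Free R)
    {S : Finset V} {v : V} (hv : v ∈ S) (hc : ConnOn R S) (hc' : ConnOn (ComplRel R) S)
    (hT : ¬ ConnOn R (S.erase v)) : False := by
  rw [ConnOn] at hT
  push_neg at hT
  obtain ⟨u, hu, w, hw, huw⟩ := hT
  by_cases hall : ∀ x ∈ S.erase v, R v x
  · -- v is complement-isolated in S
    have hru := hc' v hv u ((Finset.erase_subset v S) hu)
    rcases Relation.ReflTransGen.cases_head hru with he | ⟨c, hstep, _⟩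
    · exact (Finset.mem_erase.1 hu).1 he.symm
    · obtain ⟨_, hcS, hne, hnR⟩ := hstep
      rcases eq_or_ne c v with rfl | hcv
      · exact hne rfl
      · exact hnR (hall c (Finset.mem_erase.2 ⟨hcv, hcS⟩))
  · push_neg at hall
    obtain ⟨u0, hu0, hnvu0⟩ := hall
    -- w0 : a vertex of T not reachable from u0 within T
    have hstepsym : Symmetric (fun x y => x ∈ S.erase v ∧ y ∈ S.erase v ∧ R x y) :=
      fun x y h => ⟨h.2.1, h.1, hsym h.2.2⟩
    have hRTsym : Symmetric (Relation.ReflTransGen (fun x y => x ∈ S.erase v ∧ y ∈ S.erase v ∧ R x y)) :=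
      fun x y h => (@Relation.ReflTransGen.symmetric _ _ ⟨fun a b h => hstepsym h⟩).symm x y h
    obtain ⟨w0, hw0T, hw0⟩ : ∃ w0, w0 ∈ S.erase v ∧ ¬ ReachIn R (S.erase v) u0 w0 := by
      by_cases h1 : ReachIn R (S.erase v) u0 u
      · by_cases h2 : ReachIn R (S.erase v) u0 w
        · exact absurd ((hRTsym h1).trans h2) huw
        · exact ⟨w, hw, h2⟩
      · exact ⟨u, hu, h1⟩
    have hu0v : u0 ≠ v := (Finset.mem_erase.1 hu0).1
    have hreach := hc u0 ((Finset.erase_subset v S) hu0) w0 ((Finset.erase_subset v S) hw0T)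
    rcases reach_split hirr hu0v w0 hreach with hdir | ⟨⟨y, hyT, hyv, hy⟩, hz⟩
    · exact hw0 hdir
    · rcases hz with rfl | ⟨z, hzT, hvz, hzw0⟩
      · exact (Finset.mem_erase.1 hw0T).1 rfl
      · have hzC : ¬ ReachIn R (S.erase v) u0 z := fun h => hw0 (h.trans hzw0)
        obtain ⟨p, q, hpT, hqT, hup, huq, hpq, hpv, hqv⟩ :=
          first_nbr hu0 y hy (fun h => hnvu0 (hsym h)) hyv
        -- induced P4 : p - q - v - z
        have hpz : ¬ R p z := fun h => hzC (hup.tail ⟨hpT, hzT, h⟩)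
        have hqz : ¬ R q z := fun h => hzC (huq.tail ⟨hqT, hzT, h⟩)
        refine hP4 p q v z ?_ ?_ ?_ ?_ ?_ ?_ hpq (hqv) (hvz) hpv hpz hqz
        · exact fun h => hirr q (h ▸ hpq)
        · exact (Finset.mem_erase.1 hpT).1
        · exact fun h => hzC (h ▸ hup)
        · exact (Finset.mem_erase.1 hqT).1
        · exact fun h => hzC (h ▸ huq)
        · exact fun h => (Finset.mem_erase.1 hzT).1 h.symm

/-- Seinsche-type theorem: a P4-free graph on at least two vertices is
disconnected or co-disconnected. -/
lemma seinsche {R : V → V → Prop} (hsym : Symmetric R) (hirr : ∀ x, ¬ R x x)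
    (hP4 : P4Free R) :
    ∀ S : Finset V, 2 ≤ S.card → ConnOn R S → ConnOn (ComplRel R) S → False := by
  intro S
  induction S using Finset.strongInduction with
  | _ S ih =>
    intro h2 hc hc'
    obtain ⟨u, hu, w, hw, huw⟩ := Finset.one_lt_card.1 h2
    rcases Nat.lt_or_ge S.card 3 with h3 | h3
    · -- S has exactly two elements
      have hsub : ∀ x ∈ S, x = u ∨ x = w := by
        intro x hx
        by_contra hcon
        push_neg at hcon
        have : 3 ≤ S.card := by
          have : {x, u, w} ⊆ S := by
            intro t ht
            simp only [Finset.mem_insert, Finset.mem_singleton] at ht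
            rcases ht with rfl | rfl | rfl <;> assumption
          calc 3 = ({x, u, w} : Finset V).card := by
                    rw [Finset.card_insert_of_notMem (by simp [hcon.1, hcon.2]),
                        Finset.card_insert_of_notMem (by simp [huw]),
                        Finset.card_singleton]
               _ ≤ S.card := Finset.card_le_card this
        omega
      by_cases hR : R u w
      · -- complement has no edge inside S
        have := hc' u hu w hw
        rcases Relation.ReflTransGen.cases_head this with he | ⟨c, hstep, _⟩
        · exact huw he
        · obtain ⟨huS, hcS, hne, hnR⟩ := hstep
          rcases hsub c hcS with rfl | rfl
          · exact hne rfl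
          · exact hnR hR
      · have := hc u hu w hw
        rcases Relation.ReflTransGen.cases_head this with he | ⟨c, hstep, _⟩
        · exact huw he
        · obtain ⟨huS, hcS, hRuc⟩ := hstep
          rcases hsub c hcS with h | h
          · rw [h] at hRuc; exact hirr u hRuc
          · rw [h] at hRuc; exact hR hRuc
    · -- S has at least 3 elements: erase a vertex
      have hvS : u ∈ S := hu
      have hTcard : 2 ≤ (S.erase u).card := by
        rw [Finset.card_erase_of_mem hvS]; omega
      by_cases hT : ConnOn R (S.erase u)
      · by_cases hT' : ConnOn (ComplRel R) (S.erase u)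
        · exact ih (S.erase u) (Finset.erase_ssubset hvS) hTcard hT hT'
        · exact keyL (complRel_symm hsym) (complRel_irrefl R) (complRel_P4Free hsym hP4)
            hvS hc' (connOn_congr (fun x y => (complRel_complRel hirr x y).symm) hc) hT'
      · exact keyL hsym hirr hP4 hvS hc hc' hT

end Graph

/-- The inversion relation of a permutation. -/
def adjP {n : ℕ} (π : Fin n → Fin n) (i j : Fin n) : Prop :=
  ((i:ℕ) < j ∧ (π j:ℕ) < π i) ∨ ((j:ℕ) < i ∧ (π i:ℕ) < π j)

lemma adjP_symm {n : ℕ} (π : Fin n → Fin n) : Symmetric (adjP π) := by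
  intro x y h; rcases h with h | h
  · exact Or.inr h
  · exact Or.inl h

lemma adjP_irrefl {n : ℕ} (π : Fin n → Fin n) (x : Fin n) : ¬ adjP π x x := by
  intro h; rcases h with h | h <;> omega

lemma keyConfig (pa pb pc pd va vb vc vd : ℕ)
    (iab : va ≠ vb) (iac : va ≠ vc) (iad : va ≠ vd) (ibc : vb ≠ vc) (ibd : vb ≠ vd) (icd : vc ≠ vd)
    (vab : pa ≠ pb) (vac : pa ≠ pc) (vad : pa ≠ pd) (vbc : pb ≠ pc) (vbd : pb ≠ pd) (vcd : pc ≠ pd)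
    (eab : (pa < pb ∧ vb < va) ∨ (pb < pa ∧ va < vb))
    (ebc : (pb < pc ∧ vc < vb) ∨ (pc < pb ∧ vb < vc))
    (ecd : (pc < pd ∧ vd < vc) ∨ (pd < pc ∧ vc < vd))
    (nac : ¬ ((pa < pc ∧ vc < va) ∨ (pc < pa ∧ va < vc)))
    (nad : ¬ ((pa < pd ∧ vd < va) ∨ (pd < pa ∧ va < vd)))
    (nbd : ¬ ((pb < pd ∧ vd < vb) ∨ (pd < pb ∧ vb < vd))) :
    (pa < pc ∧ pc < pb ∧ pb < pd ∧ vb < va ∧ va < vd ∧ vd < vc) ∨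
    (pd < pb ∧ pb < pc ∧ pc < pa ∧ vc < vd ∧ vd < va ∧ va < vb) ∨
    (pb < pa ∧ pa < pd ∧ pd < pc ∧ va < vc ∧ vc < vb ∧ vb < vd) ∨
    (pc < pd ∧ pd < pa ∧ pa < pb ∧ vd < vb ∧ vb < vc ∧ vc < va) := by
  have E1 : pa < pb ↔ vb < va := by omega
  have E2 : pb < pc ↔ vc < vb := by omega
  have E3 : pc < pd ↔ vd < vc := by omega
  have N1 : pa < pc ↔ va < vc := by omega
  have N2 : pa < pd ↔ va < vd := by omega
  have N3 : pb < pd ↔ vb < vd := by omega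
  clear eab ebc ecd nac nad nbd
  rcases Nat.lt_or_ge pa pb with h1 | h1 <;> rcases Nat.lt_or_ge pa pc with h2 | h2
  · exact Or.inl (by omega)
  · exact Or.inr (Or.inr (Or.inr (by omega)))
  · exact Or.inr (Or.inr (Or.inl (by omega)))
  · exact Or.inr (Or.inl (by omega))

lemma adjP_P4Free {n : ℕ} (π : Fin n → Fin n) (hπ : Function.Injective π)
    (h1 : ¬ PermContains π p2413) (h2 : ¬ PermContains π p3142) : P4Free (adjP π) := by
  intro a b c d hab hac had hbc hbd hcd eab ebc ecd nac nad nbd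
  have iab : (π a : ℕ) ≠ π b := fun h => hab (hπ (Fin.val_injective h))
  have iac : (π a : ℕ) ≠ π c := fun h => hac (hπ (Fin.val_injective h))
  have iad : (π a : ℕ) ≠ π d := fun h => had (hπ (Fin.val_injective h))
  have ibc : (π b : ℕ) ≠ π c := fun h => hbc (hπ (Fin.val_injective h))
  have ibd : (π b : ℕ) ≠ π d := fun h => hbd (hπ (Fin.val_injective h))
  have icd : (π c : ℕ) ≠ π d := fun h => hcd (hπ (Fin.val_injective h))
  have vab : (a:ℕ) ≠ b := fun h => hab (Fin.val_injective h)
  have vac : (a:ℕ) ≠ c := fun h => hac (Fin.val_injective h)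
  have vad : (a:ℕ) ≠ d := fun h => had (Fin.val_injective h)
  have vbc : (b:ℕ) ≠ c := fun h => hbc (Fin.val_injective h)
  have vbd : (b:ℕ) ≠ d := fun h => hbd (Fin.val_injective h)
  have vcd : (c:ℕ) ≠ d := fun h => hcd (Fin.val_injective h)
  unfold adjP at eab ebc ecd nac nad nbd
  have key := keyConfig (a:ℕ) (b:ℕ) (c:ℕ) (d:ℕ) (π a:ℕ) (π b:ℕ) (π c:ℕ) (π d:ℕ)
    iab iac iad ibc ibd icd vab vac vad vbc vbd vcd eab ebc ecd nac nad nbd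
  rcases key with ⟨p1, p2, p3, q1, q2, q3⟩ | ⟨p1, p2, p3, q1, q2, q3⟩ |
    ⟨p1, p2, p3, q1, q2, q3⟩ | ⟨p1, p2, p3, q1, q2, q3⟩
  · exact h1 (contains2413 π a c b d p1 p2 p3 q1 q2 q3)
  · exact h1 (contains2413 π d b c a p1 p2 p3 q1 q2 q3)
  · exact h2 (contains3142 π b a d c p1 p2 p3 q1 q2 q3)
  · exact h2 (contains3142 π c d a b p1 p2 p3 q1 q2 q3)

/-- Generic block extraction from disconnection. -/
lemma block {n : ℕ} (R : Fin n → Fin n → Prop) (hsym : Symmetric R)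
    (hstraddle : ∀ p r q : Fin n, (p:ℕ) < r → (r:ℕ) < q → R p q → R p r ∨ R r q)
    (hn : 2 ≤ n) (hdis : ¬ ConnOn R Finset.univ) :
    ∃ k, 0 < k ∧ k < n ∧ ∀ c d : Fin n, (c:ℕ) < k → k ≤ (d:ℕ) → ¬ R c d := by
  classical
  rw [ConnOn] at hdis
  push_neg at hdis
  obtain ⟨u, -, w, -, huw⟩ := hdis
  have huw' : ¬ Relation.ReflTransGen R u w := by
    intro h
    exact huw (Relation.ReflTransGen.mono (r := R)
      (p := fun x y => x ∈ (Finset.univ : Finset (Fin n)) ∧ y ∈ (Finset.univ : Finset (Fin n)) ∧ R x y)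
      (fun x y hxy => ⟨Finset.mem_univ x, Finset.mem_univ y, hxy⟩) u w h)
  set z0 : Fin n := ⟨0, by omega⟩ with hz0
  set C : Fin n → Prop := fun x => Relation.ReflTransGen R z0 x with hC
  -- C is downward closed
  have hdown : ∀ x, C x → ∀ y : Fin n, (y:ℕ) ≤ x → C y := by
    intro x hx
    induction hx with
    | refl =>
      intro y hy
      have : y = z0 := by
        apply Fin.ext; simp [hz0] at hy ⊢; omega
      rw [this]
    | @tail c x hzc hcx ih =>
      intro y hy
      by_cases h1 : (y:ℕ) ≤ c
      · exact ih y h1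
      · by_cases h2 : y = x
        · exact h2 ▸ (Relation.ReflTransGen.tail hzc hcx)
        · have hcy : (c:ℕ) < y := by omega
          have hyx : (y:ℕ) < x := by
            rcases Nat.lt_or_ge (y:ℕ) (x:ℕ) with h | h
            · exact h
            · exfalso
              have : (y:ℕ) = x := by omega
              exact h2 (Fin.ext this)
          rcases hstraddle c y x hcy hyx hcx with h | h
          · exact Relation.ReflTransGen.tail hzc h
          · exact Relation.ReflTransGen.tail (Relation.ReflTransGen.tail hzc hcx) (hsym h)
  -- some vertex is not in C
  have hnotall : ∃ m : Fin n, ¬ C m := by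
    by_contra hcon
    push_neg at hcon
    exact huw' (((@Relation.ReflTransGen.symmetric _ R ⟨fun a b h => hsym h⟩).symm _ _ (hcon u)).trans (hcon w))
  obtain ⟨m, hm⟩ := hnotall
  have hPex : ∃ j : ℕ, ∃ h : j < n, ¬ C ⟨j, h⟩ := ⟨(m:ℕ), m.isLt, by simpa using hm⟩
  set k := Nat.find hPex with hk
  obtain ⟨hkn, hkC⟩ := Nat.find_spec hPex
  have hmin : ∀ j, j < k → ∀ h : j < n, C ⟨j, h⟩ := by
    intro j hj h
    by_contra hcon
    exact Nat.find_min hPex hj ⟨h, hcon⟩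
  have hk0 : 0 < k := by
    rcases Nat.eq_zero_or_pos k with h | h
    · exfalso
      apply hkC
      have : (⟨k, hkn⟩ : Fin n) = z0 := by apply Fin.ext; simp [hz0, h]
      rw [this]
    · exact h
  refine ⟨k, hk0, hkn, ?_⟩
  intro c d hc hd hR
  have hcC : C c := by
    have := hmin (c:ℕ) hc c.isLt
    simpa using this
  have hdC : ¬ C d := by
    intro h
    exact hkC (hdown d h ⟨k, hkn⟩ (by simpa using hd))
  exact hdC (Relation.ReflTransGen.tail hcC hR)

lemma card_filter_lt (n m : ℕ) (h : m ≤ n) :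
    (Finset.univ.filter (fun x : Fin n => (x:ℕ) < m)).card = m := by
  classical
  have heq : Finset.univ.filter (fun x : Fin n => (x:ℕ) < m) =
      (Finset.range m).attachFin (fun j hj => lt_of_lt_of_le (Finset.mem_range.1 hj) h) := by
    ext x
    simp [Finset.mem_attachFin]
  rw [heq, Finset.card_attachFin, Finset.card_range]

lemma card_filter_ge (n m : ℕ) (h : m ≤ n) :
    (Finset.univ.filter (fun x : Fin n => m ≤ (x:ℕ))).card = n - m := by
  classical
  have hsplit := Finset.card_filter_add_card_filter_not
    (s := (Finset.univ : Finset (Fin n))) (p := fun x : Fin n => (x:ℕ) < m)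
  rw [Finset.card_univ, Fintype.card_fin] at hsplit
  have h1 := card_filter_lt n m h
  have h2 : (Finset.univ.filter (fun x : Fin n => ¬ (x:ℕ) < m)) =
      (Finset.univ.filter (fun x : Fin n => m ≤ (x:ℕ))) := by
    apply Finset.filter_congr
    intro x _
    simp [Nat.not_lt]
  rw [h1, h2] at hsplit
  omega

/-- Values of the lower block are the smallest ones (direct-sum case). -/
lemma low_vals {n k : ℕ} (π : Fin n → Fin n) (hinj : Function.Injective π) (hk : k < n)
    (hcross : ∀ c d : Fin n, (c:ℕ) < k → k ≤ (d:ℕ) → (π c:ℕ) < π d) :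
    ∀ i : Fin n, (i:ℕ) < k → (π i:ℕ) < k := by
  classical
  intro i hi
  by_contra hcon
  push_neg at hcon
  set H := Finset.univ.filter (fun d : Fin n => k ≤ (d:ℕ)) with hH
  have himg : H.image π ⊆ Finset.univ.filter (fun v : Fin n => (π i:ℕ) + 1 ≤ (v:ℕ)) := by
    intro v hv
    obtain ⟨d, hd, rfl⟩ := Finset.mem_image.1 hv
    have hdk : k ≤ (d:ℕ) := (Finset.mem_filter.1 hd).2
    have := hcross i d hi hdk
    simp only [Finset.mem_filter, Finset.mem_univ, true_and]
    omega
  have hcard1 : (H.image π).card = n - k := by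
    rw [Finset.card_image_of_injective _ hinj, hH, card_filter_ge n k (le_of_lt hk)]
  have hcard2 : (Finset.univ.filter (fun v : Fin n => (π i:ℕ) + 1 ≤ (v:ℕ))).card
      = n - ((π i:ℕ) + 1) := by
    have := (π i).isLt
    exact card_filter_ge n ((π i:ℕ) + 1) (by omega)
  have hle := Finset.card_le_card himg
  rw [hcard1, hcard2] at hle
  have := (π i).isLt
  omega

/-- Values of the lower block are the largest ones (skew-sum case). -/
lemma high_vals {n k : ℕ} (π : Fin n → Fin n) (hinj : Function.Injective π) (hk : k < n)
    (hcross : ∀ c d : Fin n, (c:ℕ) < k → k ≤ (d:ℕ) → (π d:ℕ) < π c) :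
    ∀ i : Fin n, (i:ℕ) < k → n - k ≤ (π i:ℕ) := by
  classical
  intro i hi
  set H := Finset.univ.filter (fun d : Fin n => k ≤ (d:ℕ)) with hH
  have himg : H.image π ⊆ Finset.univ.filter (fun v : Fin n => (v:ℕ) < (π i:ℕ)) := by
    intro v hv
    obtain ⟨d, hd, rfl⟩ := Finset.mem_image.1 hv
    have hdk : k ≤ (d:ℕ) := (Finset.mem_filter.1 hd).2
    have := hcross i d hi hdk
    simp only [Finset.mem_filter, Finset.mem_univ, true_and]
    omega
  have hcard1 : (H.image π).card = n - k := by
    rw [Finset.card_image_of_injective _ hinj, hH, card_filter_ge n k (le_of_lt hk)]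
  have hcard2 : (Finset.univ.filter (fun v : Fin n => (v:ℕ) < (π i:ℕ))).card = (π i:ℕ) := by
    have := (π i).isLt
    exact card_filter_lt n (π i:ℕ) (by omega)
  have hle := Finset.card_le_card himg
  rw [hcard1, hcard2] at hle
  exact hle

/-- The decomposition lemma. -/
lemma decomp {n : ℕ} (π : Fin n → Fin n) (hπ : Function.Bijective π) (hn : 2 ≤ n)
    (h1 : ¬ PermContains π p2413) (h2 : ¬ PermContains π p3142) :
    ∃ k, 0 < k ∧ k < n ∧
      ((∀ i : Fin n, (i:ℕ) < k → (π i:ℕ) < k) ∨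
       (∀ i : Fin n, (i:ℕ) < k → n - k ≤ (π i:ℕ))) := by
  classical
  have hinj := hπ.1
  have hP4 := adjP_P4Free π hinj h1 h2
  have hcard : 2 ≤ (Finset.univ : Finset (Fin n)).card := by
    rw [Finset.card_univ, Fintype.card_fin]; exact hn
  have hdis : ¬ ConnOn (adjP π) Finset.univ ∨ ¬ ConnOn (ComplRel (adjP π)) Finset.univ := by
    by_contra hcon
    push_neg at hcon
    exact seinsche (adjP_symm π) (adjP_irrefl π) hP4 Finset.univ hcard hcon.1 hcon.2
  rcases hdis with hdis | hdis
  · -- direct sum case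
    have hstraddle : ∀ p r q : Fin n, (p:ℕ) < r → (r:ℕ) < q → adjP π p q →
        adjP π p r ∨ adjP π r q := by
      intro p r q hpr hrq hpq
      by_contra hcon
      push_neg at hcon
      obtain ⟨hc1, hc2⟩ := hcon
      unfold adjP at hc1 hc2 hpq
      have hne1 : (π p:ℕ) ≠ π r := fun h => (by omega : (p:ℕ) ≠ r) (congrArg Fin.val (hinj (Fin.val_injective h)))
      have hne2 : (π r:ℕ) ≠ π q := fun h => (by omega : (r:ℕ) ≠ q) (congrArg Fin.val (hinj (Fin.val_injective h)))
      omega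
    obtain ⟨k, hk0, hkn, hcross⟩ := block (adjP π) (adjP_symm π) hstraddle hn hdis
    refine ⟨k, hk0, hkn, Or.inl ?_⟩
    apply low_vals π hinj hkn
    intro c d hc hd
    have := hcross c d hc hd
    unfold adjP at this
    have hne : (π c:ℕ) ≠ π d := fun h => (by omega : (c:ℕ) ≠ d) (congrArg Fin.val (hinj (Fin.val_injective h)))
    omega
  · -- skew sum case
    have hstraddle : ∀ p r q : Fin n, (p:ℕ) < r → (r:ℕ) < q → ComplRel (adjP π) p q →
        ComplRel (adjP π) p r ∨ ComplRel (adjP π) r q := by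
      intro p r q hpr hrq hpq
      by_contra hcon
      push_neg at hcon
      obtain ⟨hc1, hc2⟩ := hcon
      have hpr' : p ≠ r := fun h => (by omega : (p:ℕ) ≠ r) (congrArg Fin.val h)
      have hrq' : r ≠ q := fun h => (by omega : (r:ℕ) ≠ q) (congrArg Fin.val h)
      have a1 : adjP π p r := by
        by_contra h; exact hc1 ⟨hpr', h⟩
      have a2 : adjP π r q := by
        by_contra h; exact hc2 ⟨hrq', h⟩
      obtain ⟨-, hnadj⟩ := hpq
      unfold adjP at a1 a2 hnadj
      omega
    obtain ⟨k, hk0, hkn, hcross⟩ := block (ComplRel (adjP π)) (complRel_symm (adjP_symm π))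
      hstraddle hn hdis
    refine ⟨k, hk0, hkn, Or.inr ?_⟩
    apply high_vals π hinj hkn
    intro c d hc hd
    have hcd := hcross c d hc hd
    have hne : c ≠ d := fun h => (by omega : (c:ℕ) ≠ d) (congrArg Fin.val h)
    have hadj : adjP π c d := by
      by_contra h; exact hcd ⟨hne, h⟩
    unfold adjP at hadj
    have hnev : (π c:ℕ) ≠ π d := fun h => (by omega : (c:ℕ) ≠ d) (congrArg Fin.val (hinj (Fin.val_injective h)))
    omega

lemma contains_mono {n m q : ℕ} {π : Fin n → Fin n} {σ : Fin m → Fin m} {ρ : Fin q → Fin q}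
    (g : Fin m → Fin n) (hg : StrictMono g)
    (hval : ∀ x y : Fin m, σ x < σ y ↔ π (g x) < π (g y)) :
    PermContains σ ρ → PermContains π ρ := by
  rintro ⟨f, hf, hiff⟩
  exact ⟨g ∘ f, hg.comp hf, fun a b => (hiff a b).trans (hval _ _)⟩

lemma permDSum_val_low {m p : ℕ} (σ : Fin m → Fin m) (τ : Fin p → Fin p) (i : Fin (m + p))
    (h : (i:ℕ) < m) : (permDSum σ τ i : ℕ) = σ ⟨(i:ℕ), h⟩ := by
  simp [permDSum, h]

lemma permDSum_val_high {m p : ℕ} (σ : Fin m → Fin m) (τ : Fin p → Fin p) (i : Fin (m + p))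
    (h : ¬ (i:ℕ) < m) : (permDSum σ τ i : ℕ) = m + τ ⟨(i:ℕ) - m, by omega⟩ := by
  simp [permDSum, h]

lemma permSSum_val_low {m p : ℕ} (σ : Fin m → Fin m) (τ : Fin p → Fin p) (i : Fin (m + p))
    (h : (i:ℕ) < m) : (permSSum σ τ i : ℕ) = p + σ ⟨(i:ℕ), h⟩ := by
  simp [permSSum, h]

lemma permSSum_val_high {m p : ℕ} (σ : Fin m → Fin m) (τ : Fin p → Fin p) (i : Fin (m + p))
    (h : ¬ (i:ℕ) < m) : (permSSum σ τ i : ℕ) = τ ⟨(i:ℕ) - m, by omega⟩ := by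
  simp [permSSum, h]

/-- Master decomposition: everything needed about the two blocks. -/
lemma master {n : ℕ} (π : Fin n → Fin n) (hπ : Function.Bijective π) (hn : 2 ≤ n)
    (h1 : ¬ PermContains π p2413) (h2 : ¬ PermContains π p3142) :
    ∃ (a b : ℕ) (σ : Fin a → Fin a) (τ : Fin b → Fin b),
      0 < a ∧ 0 < b ∧
      Function.Bijective σ ∧ Function.Bijective τ ∧
      (¬ PermContains σ p2413) ∧ (¬ PermContains σ p3142) ∧
      (¬ PermContains τ p2413) ∧ (¬ PermContains τ p3142) ∧
      ∃ h : a + b = n,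
        ((∀ i : Fin n, (π i : ℕ) = (permDSum σ τ ⟨(i : ℕ), by have := i.isLt; omega⟩ : Fin (a + b)).val) ∨
         (∀ i : Fin n, (π i : ℕ) = (permSSum σ τ ⟨(i : ℕ), by have := i.isLt; omega⟩ : Fin (a + b)).val)) := by
  classical
  have hinj := hπ.1
  obtain ⟨k, hk0, hkn, hcase⟩ := decomp π hπ hn h1 h2
  obtain ⟨b, rfl⟩ : ∃ b, n = k + b := ⟨n - k, by omega⟩
  have hb0 : 0 < b := by omega
  set g : Fin k → Fin (k + b) := fun x => ⟨(x:ℕ), by omega⟩ with hgdef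
  set hfun : Fin b → Fin (k + b) := fun x => ⟨k + (x:ℕ), by omega⟩ with hhdef
  have hgmono : StrictMono g := fun x y hxy => hxy
  have hhmono : StrictMono hfun := by
    intro x y hxy
    simp only [hhdef, Fin.lt_def]
    have : (x:ℕ) < y := hxy
    omega
  rcases hcase with hlow | hlow
  · -- direct sum
    set σ : Fin k → Fin k := fun x => ⟨(π (g x) : ℕ), hlow (g x) x.isLt⟩ with hσdef
    have hσinj : Function.Injective σ := by
      intro x y hxy
      have h0 := congrArg Fin.val hxy
      have h3 : π (g x) = π (g y) := Fin.ext h0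
      have h4 := hinj h3
      have h5 := congrArg Fin.val h4
      exact Fin.ext h5
    have hσbij : Function.Bijective σ := Finite.injective_iff_bijective.1 hσinj
    have hhigh : ∀ i : Fin (k + b), k ≤ (i:ℕ) → k ≤ (π i : ℕ) := by
      intro i hik
      by_contra hcon
      push_neg at hcon
      obtain ⟨x, hx⟩ := hσbij.2 ⟨(π i : ℕ), hcon⟩
      have h0 := congrArg Fin.val hx
      have h3 : (π (g x) : ℕ) = (π i : ℕ) := h0
      have h4 := hinj (Fin.ext h3)
      have h5 : (x:ℕ) = (i:ℕ) := congrArg Fin.val h4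
      have := x.isLt
      omega
    set τ : Fin b → Fin b := fun x => ⟨(π (hfun x) : ℕ) - k, by
      have ha := hhigh (hfun x) (Nat.le_add_right k (x:ℕ))
      have hb := (π (hfun x)).isLt
      omega⟩ with hτdef
    have hτinj : Function.Injective τ := by
      intro x y hxy
      have h0 := congrArg Fin.val hxy
      have h3 : (π (hfun x) : ℕ) - k = (π (hfun y) : ℕ) - k := h0
      have ha := hhigh (hfun x) (Nat.le_add_right k (x:ℕ))
      have hb := hhigh (hfun y) (Nat.le_add_right k (y:ℕ))
      have h4 : (π (hfun x) : ℕ) = (π (hfun y) : ℕ) := by omega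
      have h5 := hinj (Fin.ext h4)
      have h6 : k + (x:ℕ) = k + (y:ℕ) := congrArg Fin.val h5
      exact Fin.ext (by omega)
    have hτbij : Function.Bijective τ := Finite.injective_iff_bijective.1 hτinj
    have hvalσ : ∀ x y : Fin k, σ x < σ y ↔ π (g x) < π (g y) := fun x y => Iff.rfl
    have hvalτ : ∀ x y : Fin b, τ x < τ y ↔ π (hfun x) < π (hfun y) := by
      intro x y
      rw [Fin.lt_def, Fin.lt_def]
      have ha := hhigh (hfun x) (Nat.le_add_right k (x:ℕ))
      have hb := hhigh (hfun y) (Nat.le_add_right k (y:ℕ))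
      simp only [hτdef]
      omega
    refine ⟨k, b, σ, τ, hk0, hb0, hσbij, hτbij,
      fun hc => h1 (contains_mono g hgmono hvalσ hc),
      fun hc => h2 (contains_mono g hgmono hvalσ hc),
      fun hc => h1 (contains_mono hfun hhmono hvalτ hc),
      fun hc => h2 (contains_mono hfun hhmono hvalτ hc),
      rfl, Or.inl ?_⟩
    intro i
    rw [Fin.eta]
    by_cases hik : (i:ℕ) < k
    · rw [permDSum_val_low σ τ i hik]
    · rw [permDSum_val_high σ τ i hik]
      have hhi : hfun ⟨(i:ℕ) - k, by omega⟩ = i := Fin.ext (by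
        show k + ((i:ℕ) - k) = (i:ℕ); omega)
      show (π i : ℕ) = k + ((π (hfun ⟨(i:ℕ) - k, _⟩) : ℕ) - k)
      rw [hhi]
      have := hhigh i (by omega)
      omega
  · -- skew sum
    have hlow' : ∀ i : Fin (k + b), (i:ℕ) < k → b ≤ (π i : ℕ) := by
      intro i hik
      have := hlow i hik
      omega
    set σ : Fin k → Fin k := fun x => ⟨(π (g x) : ℕ) - b, by
      have ha := hlow' (g x) x.isLt
      have hb := (π (g x)).isLt
      omega⟩ with hσdef
    have hσinj : Function.Injective σ := by
      intro x y hxy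
      have h0 := congrArg Fin.val hxy
      have h3 : (π (g x) : ℕ) - b = (π (g y) : ℕ) - b := h0
      have ha := hlow' (g x) x.isLt
      have hb := hlow' (g y) y.isLt
      have h4 := hinj (Fin.ext (by omega : (π (g x) : ℕ) = (π (g y) : ℕ)))
      have h5 := congrArg Fin.val h4
      exact Fin.ext h5
    have hσbij : Function.Bijective σ := Finite.injective_iff_bijective.1 hσinj
    have hhigh : ∀ i : Fin (k + b), k ≤ (i:ℕ) → (π i : ℕ) < b := by
      intro i hik
      by_contra hcon
      push_neg at hcon
      have hlt : (π i : ℕ) - b < k := by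
        have := (π i).isLt
        omega
      obtain ⟨x, hx⟩ := hσbij.2 ⟨(π i : ℕ) - b, hlt⟩
      have h0 := congrArg Fin.val hx
      have h3 : (π (g x) : ℕ) - b = (π i : ℕ) - b := h0
      have ha := hlow' (g x) x.isLt
      have h4 := hinj (Fin.ext (by omega : (π (g x) : ℕ) = (π i : ℕ)))
      have h5 : (x:ℕ) = (i:ℕ) := congrArg Fin.val h4
      have := x.isLt
      omega
    set τ : Fin b → Fin b := fun x => ⟨(π (hfun x) : ℕ),
      hhigh (hfun x) (Nat.le_add_right k (x:ℕ))⟩ with hτdef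
    have hτinj : Function.Injective τ := by
      intro x y hxy
      have h0 := congrArg Fin.val hxy
      have h3 : (π (hfun x) : ℕ) = (π (hfun y) : ℕ) := h0
      have h5 := hinj (Fin.ext h3)
      have h6 : k + (x:ℕ) = k + (y:ℕ) := congrArg Fin.val h5
      exact Fin.ext (by omega)
    have hτbij : Function.Bijective τ := Finite.injective_iff_bijective.1 hτinj
    have hvalσ : ∀ x y : Fin k, σ x < σ y ↔ π (g x) < π (g y) := by
      intro x y
      rw [Fin.lt_def, Fin.lt_def]
      have ha := hlow' (g x) x.isLt
      have hb := hlow' (g y) y.isLt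
      simp only [hσdef]
      omega
    have hvalτ : ∀ x y : Fin b, τ x < τ y ↔ π (hfun x) < π (hfun y) := fun x y => Iff.rfl
    refine ⟨k, b, σ, τ, hk0, hb0, hσbij, hτbij,
      fun hc => h1 (contains_mono g hgmono hvalσ hc),
      fun hc => h2 (contains_mono g hgmono hvalσ hc),
      fun hc => h1 (contains_mono hfun hhmono hvalτ hc),
      fun hc => h2 (contains_mono hfun hhmono hvalτ hc),
      rfl, Or.inr ?_⟩
    intro i
    rw [Fin.eta]
    by_cases hik : (i:ℕ) < k
    · rw [permSSum_val_low σ τ i hik]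
      have hgi : g ⟨(i:ℕ), hik⟩ = i := Fin.ext rfl
      show (π i : ℕ) = b + ((π (g ⟨(i:ℕ), hik⟩) : ℕ) - b)
      rw [hgi]
      have := hlow' i hik
      omega
    · rw [permSSum_val_high σ τ i hik]
      have hhi : hfun ⟨(i:ℕ) - k, by omega⟩ = i := Fin.ext (by
        show k + ((i:ℕ) - k) = (i:ℕ); omega)
      show (π i : ℕ) = (π (hfun ⟨(i:ℕ) - k, _⟩) : ℕ)
      rw [hhi]

/-- Every avoiding permutation is separable (strong induction). -/
lemma sep_of : ∀ n : ℕ, ∀ π : Fin n → Fin n, Function.Bijective π →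
    ¬ PermContains π p2413 → ¬ PermContains π p3142 → 1 ≤ n → SeparablePerm n π := by
  intro n
  induction n using Nat.strong_induction_on with
  | _ n ih =>
    intro π hπ h1 h2 hn1
    rcases Nat.lt_or_ge n 2 with hn2 | hn2
    · have hn : n = 1 := by omega
      subst hn
      have hid : π = id := by
        funext i
        apply Subsingleton.elim
      rw [hid]
      exact SeparablePerm.single
    · obtain ⟨a, b, σ, τ, ha, hb, bijσ, bijτ, hσ1, hσ2, hτ1, hτ2, hab, hpt⟩ :=
        master π hπ hn2 h1 h2
      subst hab
      have hσsep : SeparablePerm a σ := ih a (by omega) σ bijσ hσ1 hσ2 (by omega)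
      have hτsep : SeparablePerm b τ := ih b (by omega) τ bijτ hτ1 hτ2 (by omega)
      rcases hpt with hpt | hpt
      · have hfun : π = permDSum σ τ := by
          funext i
          apply Fin.ext
          rw [hpt i, Fin.eta]
        rw [hfun]
        exact SeparablePerm.dsum hσsep hτsep
      · have hfun : π = permSSum σ τ := by
          funext i
          apply Fin.ext
          rw [hpt i, Fin.eta]
        rw [hfun]
        exact SeparablePerm.ssum hσsep hτsep

/-- A `{2413, 3142}`-avoiding permutation of length at least 2 decomposes as a direct
sum or a skew sum of two nonempty permutations; consequently it is separable. -/
theorem avoiding_decomposes_and_is_separable {n : ℕ} (π : Fin n → Fin n)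
    (hπ : Function.Bijective π) (hn : 2 ≤ n)
    (h2413 : ¬ PermContains π p2413) (h3142 : ¬ PermContains π p3142) :
    (∃ (a b : ℕ) (σ : Fin a → Fin a) (τ : Fin b → Fin b),
      0 < a ∧ 0 < b ∧ ∃ h : a + b = n,
        ((∀ i : Fin n, (π i : ℕ) = (permDSum σ τ ⟨(i : ℕ), by omega⟩ : Fin (a + b)).val) ∨
         (∀ i : Fin n, (π i : ℕ) = (permSSum σ τ ⟨(i : ℕ), by omega⟩ : Fin (a + b)).val))) ∧
    SeparablePerm n π := by
  obtain ⟨a, b, σ, τ, ha, hb, bijσ, bijτ, hσ1, hσ2, hτ1, hτ2, hab, hpt⟩ :=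
    master π hπ hn h2413 h3142
  exact ⟨⟨a, b, σ, τ, ha, hb, hab, hpt⟩, sep_of n π hπ h2413 h3142 (by omega)⟩
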